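/- Under the hypotheses of the preceding Hermitian-DtN statement, the determinant of the condensed 2×2 matrix S = (1/(2Re(a)))·[k² + |a|², -|b|²; -|b|², k² + |a|²] equals k², i.e., the condensed DtN map of the conjugate element pair again satisfies the fixed-point property S_diag² - S_off² = k². -/

import Mathlib

set_option maxHeartbeats 2000000 in
theorem stmt_15 (k2 : ℝ) (L : ℂ) (hL : L ≠ 0) (a b : ℂ)
    (ha : a = 1 / L + (k2 : ℂ) * L / 4) (hb : b = -(1 / L) + (k2 : ℂ) * L / 4)
    (hre : a.re ≠ 0) :
    ((k2 + ‖a‖ ^ 2) / (2 * a.re)) ^ 2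
      - (-(‖b‖ ^ 2) / (2 * a.re)) ^ 2 = k2 := by
  have hn : L.re ^ 2 + L.im ^ 2 ≠ 0 := by
    intro h
    apply hL
    have hr : L.re = 0 := by nlinarith [sq_nonneg L.re, sq_nonneg L.im]
    have hi : L.im = 0 := by nlinarith [sq_nonneg L.re, sq_nonneg L.im]
    exact Complex.ext hr hi
  have h2r : (2 * a.re) ≠ 0 := by
    simpa using mul_ne_zero two_ne_zero hre
  rw [div_pow, div_pow, div_sub_div_same, div_eq_iff (pow_ne_zero 2 h2r)]
  rw [Complex.sq_norm, Complex.sq_norm, Complex.normSq_apply, Complex.normSq_apply]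
  have hare : a.re = L.re / (L.re ^ 2 + L.im ^ 2) + k2 * L.re / 4 := by
    simp [ha, Complex.div_re, Complex.normSq_apply, Complex.mul_re]
    ring
  have haim : a.im = -L.im / (L.re ^ 2 + L.im ^ 2) + k2 * L.im / 4 := by
    simp [ha, Complex.div_im, Complex.normSq_apply, Complex.mul_im]
    ring
  have hbre : b.re = -L.re / (L.re ^ 2 + L.im ^ 2) + k2 * L.re / 4 := by
    simp [hb, Complex.div_re, Complex.normSq_apply, Complex.mul_re]
    ring
  have hbim : b.im = L.im / (L.re ^ 2 + L.im ^ 2) + k2 * L.im / 4 := by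
    simp [hb, Complex.div_im, Complex.normSq_apply, Complex.mul_im]
    ring
  rw [hare, haim, hbre, hbim]
  field_simp
  ring
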